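/- Let n ≥ 1 and let s = (s_1, ..., s_n) be a sequence of positive integers. If s is graphic and s_1 + s_2 + ... + s_n = 2(n-1), then s is connected and graphic; indeed s is realisable by a tree (a connected simple graph on n vertices with n-1 edges). -/

import Mathlib

open SimpleGraph Finset

/-- Pull back a graph along an equivalence. -/
private def pullGraph {α β : Type*} (σ : α ≃ β) (G : SimpleGraph α) : SimpleGraph β where
  Adj a b := G.Adj (σ.symm a) (σ.symm b)
  symm := ⟨fun _ _ h => G.symm.symm _ _ h⟩
  loopless := ⟨fun _ h => G.loopless.irrefl _ h⟩

private lemma pullGraph_adj {α β : Type*} (σ : α ≃ β) (G : SimpleGraph α) (a b : β) :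
    (pullGraph σ G).Adj a b ↔ G.Adj (σ.symm a) (σ.symm b) := Iff.rfl

private lemma pullGraph_connected {α β : Type*} (σ : α ≃ β) (G : SimpleGraph α)
    (h : G.Connected) : (pullGraph σ G).Connected := by
  let f : G →g pullGraph σ G :=
    ⟨σ, by intro a b hab; rw [pullGraph_adj]; simpa using hab⟩
  have hf : ∀ x, f x = σ x := fun _ => rfl
  refine h.map f (fun b => ⟨σ.symm b, ?_⟩)
  rw [hf]
  simp

private lemma pullGraph_degree {α β : Type*} (σ : α ≃ β) (G : SimpleGraph α) (b : β)
    [Fintype ((pullGraph σ G).neighborSet b)] [Fintype (G.neighborSet (σ.symm b))] :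
    (pullGraph σ G).degree b = G.degree (σ.symm b) := by
  unfold SimpleGraph.degree
  have key : (pullGraph σ G).neighborFinset b
      = (G.neighborFinset (σ.symm b)).map σ.toEmbedding := by
    ext w
    rw [mem_neighborFinset, pullGraph_adj]
    simp only [Finset.mem_map, mem_neighborFinset, Equiv.coe_toEmbedding]
    constructor
    · intro h
      exact ⟨σ.symm w, h, by simp⟩
    · rintro ⟨u, hu, rfl⟩
      simpa using hu
  rw [key, Finset.card_map]

/-- Add a new vertex (the last one) attached as a leaf to `j.castSucc`. -/
private def addLeaf {m : ℕ} (G' : SimpleGraph (Fin (m + 1))) (j : Fin (m + 1)) :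
    SimpleGraph (Fin (m + 2)) where
  Adj a b :=
    (∃ a' b' : Fin (m + 1), a = a'.castSucc ∧ b = b'.castSucc ∧ G'.Adj a' b')
      ∨ (a = Fin.last (m + 1) ∧ b = j.castSucc)
      ∨ (b = Fin.last (m + 1) ∧ a = j.castSucc)
  symm := by
    constructor
    rintro a b (⟨a', b', rfl, rfl, h⟩ | ⟨rfl, rfl⟩ | ⟨rfl, rfl⟩)
    · exact Or.inl ⟨b', a', rfl, rfl, h.symm⟩
    · exact Or.inr (Or.inr ⟨rfl, rfl⟩)
    · exact Or.inr (Or.inl ⟨rfl, rfl⟩)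
  loopless := by
    constructor
    rintro a (⟨a', b', rfl, h2, h⟩ | ⟨rfl, h2⟩ | ⟨h2, rfl⟩)
    · cases Fin.castSucc_inj.mp h2
      exact G'.loopless.irrefl a' h
    · exact absurd h2 (Fin.castSucc_lt_last j).ne'
    · exact absurd h2 (Fin.castSucc_lt_last j).ne

private lemma addLeaf_adj {m : ℕ} (G' : SimpleGraph (Fin (m + 1))) (j : Fin (m + 1))
    (a b : Fin (m + 2)) : (addLeaf G' j).Adj a b ↔
    ((∃ a' b' : Fin (m + 1), a = a'.castSucc ∧ b = b'.castSucc ∧ G'.Adj a' b')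
      ∨ (a = Fin.last (m + 1) ∧ b = j.castSucc)
      ∨ (b = Fin.last (m + 1) ∧ a = j.castSucc)) := Iff.rfl

private lemma addLeaf_adj_last {m : ℕ} (G' : SimpleGraph (Fin (m + 1))) (j : Fin (m + 1))
    (b : Fin (m + 2)) : (addLeaf G' j).Adj (Fin.last (m + 1)) b ↔ b = j.castSucc := by
  rw [addLeaf_adj]
  constructor
  · rintro (⟨a', b', h1, rfl, h⟩ | ⟨h1, rfl⟩ | ⟨rfl, h2⟩)
    · exact absurd h1.symm (Fin.castSucc_lt_last a').ne
    · rfl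
    · exact absurd h2.symm (Fin.castSucc_lt_last j).ne
  · rintro rfl
    exact Or.inr (Or.inl ⟨rfl, rfl⟩)

private lemma addLeaf_adj_castSucc {m : ℕ} (G' : SimpleGraph (Fin (m + 1))) (j : Fin (m + 1))
    (k : Fin (m + 1)) (b : Fin (m + 2)) :
    (addLeaf G' j).Adj k.castSucc b ↔
      ((∃ b' : Fin (m + 1), b = b'.castSucc ∧ G'.Adj k b')
        ∨ (k = j ∧ b = Fin.last (m + 1))) := by
  rw [addLeaf_adj]
  constructor
  · rintro (⟨a', b', h1, rfl, h⟩ | ⟨h1, rfl⟩ | ⟨rfl, h2⟩)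
    · cases Fin.castSucc_inj.mp h1
      exact Or.inl ⟨b', rfl, h⟩
    · exact absurd h1 (Fin.castSucc_lt_last k).ne
    · cases Fin.castSucc_inj.mp h2
      exact Or.inr ⟨rfl, rfl⟩
  · rintro (⟨b', rfl, h⟩ | ⟨rfl, rfl⟩)
    · exact Or.inl ⟨k, b', rfl, rfl, h⟩
    · exact Or.inr (Or.inr ⟨rfl, rfl⟩)

private lemma addLeaf_connected {m : ℕ} (G' : SimpleGraph (Fin (m + 1))) (j : Fin (m + 1))
    (h : G'.Connected) : (addLeaf G' j).Connected := by
  let f : G' →g addLeaf G' j :=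
    ⟨Fin.castSucc, by intro a b hab; exact Or.inl ⟨a, b, rfl, rfl, hab⟩⟩
  have aux : ∀ a : Fin (m + 2), (addLeaf G' j).Reachable a j.castSucc := by
    intro a
    by_cases ha : a = Fin.last (m + 1)
    · subst ha
      exact ((addLeaf_adj_last G' j _).mpr rfl).reachable
    · have h2 := (h.preconnected (a.castPred ha) j).map f
      have h3 : (addLeaf G' j).Reachable ((a.castPred ha).castSucc) j.castSucc := h2
      rw [Fin.castSucc_castPred] at h3
      exact h3
  rw [SimpleGraph.connected_iff]
  exact ⟨fun a b => (aux a).trans (aux b).symm, ⟨Fin.last (m + 1)⟩⟩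

private lemma addLeaf_degree_last {m : ℕ} (G' : SimpleGraph (Fin (m + 1))) (j : Fin (m + 1))
    [Fintype ((addLeaf G' j).neighborSet (Fin.last (m + 1)))] :
    (addLeaf G' j).degree (Fin.last (m + 1)) = 1 := by
  unfold SimpleGraph.degree
  have key : (addLeaf G' j).neighborFinset (Fin.last (m + 1)) = {j.castSucc} := by
    ext w
    rw [mem_neighborFinset, addLeaf_adj_last, Finset.mem_singleton]
  rw [key, Finset.card_singleton]

private lemma addLeaf_degree_ne_last {m : ℕ} (G' : SimpleGraph (Fin (m + 1)))
    (j : Fin (m + 1)) (a : Fin (m + 2)) (ha : a ≠ Fin.last (m + 1))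
    [Fintype ((addLeaf G' j).neighborSet a)] [Fintype (G'.neighborSet (a.castPred ha))] :
    (addLeaf G' j).degree a
      = G'.degree (a.castPred ha) + (if a.castPred ha = j then 1 else 0) := by
  have hc : (a.castPred ha).castSucc = a := Fin.castSucc_castPred a ha
  have hAdj : ∀ b, (addLeaf G' j).Adj a b ↔
      ((∃ b' : Fin (m + 1), b = b'.castSucc ∧ G'.Adj (a.castPred ha) b')
        ∨ (a.castPred ha = j ∧ b = Fin.last (m + 1))) := by
    intro b
    conv_lhs => rw [← hc]
    exact addLeaf_adj_castSucc G' j _ b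
  unfold SimpleGraph.degree
  by_cases hkj : a.castPred ha = j
  · have key : (addLeaf G' j).neighborFinset a
        = insert (Fin.last (m + 1))
            ((G'.neighborFinset (a.castPred ha)).map Fin.castSuccEmb) := by
      ext w
      rw [mem_neighborFinset, hAdj]
      simp only [Finset.mem_insert, Finset.mem_map, mem_neighborFinset,
        Fin.castSuccEmb, Function.Embedding.coeFn_mk]
      constructor
      · rintro (⟨b', rfl, h⟩ | ⟨-, rfl⟩)
        · exact Or.inr ⟨b', h, rfl⟩
        · exact Or.inl rfl
      · rintro (rfl | ⟨b', h, rfl⟩)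
        · exact Or.inr ⟨hkj, rfl⟩
        · exact Or.inl ⟨b', rfl, h⟩
    have hnm : Fin.last (m + 1) ∉ (G'.neighborFinset (a.castPred ha)).map Fin.castSuccEmb := by
      intro hmem
      obtain ⟨x, -, hx⟩ := Finset.mem_map.mp hmem
      exact absurd hx (Fin.castSucc_lt_last x).ne
    rw [key, Finset.card_insert_of_notMem hnm, Finset.card_map, if_pos hkj]
  · have key : (addLeaf G' j).neighborFinset a
        = (G'.neighborFinset (a.castPred ha)).map Fin.castSuccEmb := by
      ext w
      rw [mem_neighborFinset, hAdj]
      simp only [Finset.mem_map, mem_neighborFinset,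
        Fin.castSuccEmb, Function.Embedding.coeFn_mk]
      constructor
      · rintro (⟨b', rfl, h⟩ | ⟨hj2, -⟩)
        · exact ⟨b', h, rfl⟩
        · exact absurd hj2 hkj
      · rintro ⟨b', h, rfl⟩
        exact Or.inl ⟨b', rfl, h⟩
    rw [key, Finset.card_map, if_neg hkj]
    exact (Nat.add_zero _).symm

private lemma key_lemma : ∀ (n : ℕ) (s : Fin (n + 1) → ℕ), (∀ i, 0 < s i) →
    (∑ i, s i = 2 * n) →
    ∃ G : SimpleGraph (Fin (n + 1)), ∃ _ : DecidableRel G.Adj,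
      G.Connected ∧ ∀ i, G.degree i = s i := by
  intro n
  induction n with
  | zero =>
    intro s hpos hsum
    have h0 := hpos 0
    rw [Fin.sum_univ_one] at hsum
    omega
  | succ m ih =>
    intro s hpos hsum
    by_cases hex : ∃ j, 2 ≤ s j
    · obtain ⟨j0, hj0⟩ := hex
      have hex1 : ∃ i, s i = 1 := by
        by_contra hc
        push_neg at hc
        have h2 : ∀ i, 2 ≤ s i := fun i => by have := hpos i; have := hc i; omega
        have hle : ∑ _i : Fin (m + 2), 2 ≤ ∑ i, s i := Finset.sum_le_sum (fun i _ => h2 i)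
        rw [Finset.sum_const, Finset.card_univ, Fintype.card_fin, smul_eq_mul] at hle
        omega
      obtain ⟨i0, hi0⟩ := hex1
      set σ : Equiv.Perm (Fin (m + 2)) := Equiv.swap i0 (Fin.last (m + 1)) with hσ
      set t : Fin (m + 2) → ℕ := s ∘ σ with ht
      have htlast : t (Fin.last (m + 1)) = 1 := by
        simp [ht, hσ, Equiv.swap_apply_right, hi0]
      have hsumt : ∑ i, t i = 2 * (m + 1) := by
        rw [← hsum]
        exact Fintype.sum_equiv σ t s (fun x => rfl)
      have hj' : σ j0 ≠ Fin.last (m + 1) := by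
        intro h
        have hji : j0 = i0 := by
          have := congrArg σ.symm h
          simpa [hσ, Equiv.swap_apply_right] using this
        rw [hji, hi0] at hj0; omega
      have htj' : 2 ≤ t (σ j0) := by
        simpa [ht, hσ] using hj0
      set jp : Fin (m + 1) := (σ j0).castPred hj' with hjp
      have hjpc : jp.castSucc = σ j0 := Fin.castSucc_castPred _ _
      have htjp : 2 ≤ t jp.castSucc := by rw [hjpc]; exact htj'
      set s' : Fin (m + 1) → ℕ := fun k => if k = jp then t k.castSucc - 1 else t k.castSucc
        with hs'
      have hpos' : ∀ k, 0 < s' k := by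
        intro k
        by_cases hk : k = jp
        · subst hk
          simp [hs']
          omega
        · simp only [hs', if_neg hk]
          exact hpos _
      have hts' : ∀ k, t k.castSucc = s' k + (if k = jp then 1 else 0) := by
        intro k
        by_cases hk : k = jp
        · subst hk
          simp [hs']
          omega
        · simp only [hs', if_neg hk, Nat.add_zero]
      have hsum' : ∑ k, s' k = 2 * m := by
        have h1 : ∑ k : Fin (m + 1), t k.castSucc
            = ∑ k, s' k + ∑ k : Fin (m + 1), (if k = jp then 1 else 0) := by
          rw [Finset.sum_congr rfl (fun k _ => hts' k), Finset.sum_add_distrib]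
        rw [Finset.sum_ite_eq' Finset.univ jp (fun _ => 1), if_pos (Finset.mem_univ jp)] at h1
        have h2 := Fin.sum_univ_castSucc t
        rw [hsumt, htlast, h1] at h2
        omega
      obtain ⟨G', instG', hconn', hdeg'⟩ := ih s' hpos' hsum'
      letI := instG'
      letI instA : DecidableRel (addLeaf G' jp).Adj := Classical.decRel _
      letI instP : DecidableRel (pullGraph σ.symm (addLeaf G' jp)).Adj := Classical.decRel _
      refine ⟨pullGraph σ.symm (addLeaf G' jp), instP, ?_, ?_⟩
      · exact pullGraph_connected _ _ (addLeaf_connected _ _ hconn')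
      · intro i
        rw [pullGraph_degree σ.symm (addLeaf G' jp) i]
        have hfin : ∀ a : Fin (m + 2), (addLeaf G' jp).degree a = t a := by
          intro a
          by_cases ha : a = Fin.last (m + 1)
          · subst ha
            rw [addLeaf_degree_last, htlast]
          · rw [addLeaf_degree_ne_last G' jp a ha, hdeg', ← hts',
              Fin.castSucc_castPred]
        rw [hfin]
        simp [ht, hσ, Equiv.symm_symm, Equiv.swap_apply_self]
    · push_neg at hex
      have hall : ∀ i, s i = 1 := fun i => by have := hpos i; have := hex i; omega
      have hcard : ∑ i, s i = m + 1 + 1 := by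
        simp [hall]
      have hm : m = 0 := by omega
      subst hm
      letI instB : DecidableRel (⊥ : SimpleGraph (Fin 1)).Adj := Classical.decRel _
      letI instA : DecidableRel (addLeaf (⊥ : SimpleGraph (Fin 1)) 0).Adj := Classical.decRel _
      refine ⟨addLeaf (⊥ : SimpleGraph (Fin 1)) 0, instA, ?_, ?_⟩
      · refine addLeaf_connected _ _ ?_
        rw [SimpleGraph.connected_iff]
        refine ⟨fun a b => ?_, ⟨0⟩⟩
        rw [Fin.eq_zero a, Fin.eq_zero b]
      · intro i
        rw [hall i]
        by_cases hi : i = Fin.last 1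
        · subst hi
          exact addLeaf_degree_last _ _
        · have hb : ∀ inst : Fintype ((⊥ : SimpleGraph (Fin (0 + 1))).neighborSet (i.castPred hi)),
              @SimpleGraph.degree _ ⊥ (i.castPred hi) inst = 0 := by
            intro inst
            unfold SimpleGraph.degree
            rw [Finset.card_eq_zero]
            ext w
            simp [mem_neighborFinset]
          rw [addLeaf_degree_ne_last _ _ i hi, hb, if_pos (Fin.eq_zero _)]

/-- A sequence `s` of length `n` is graphic if it is the degree sequence of a
finite simple graph on `n` vertices. -/
def Graphic (n : ℕ) (s : Fin n → ℕ) : Prop :=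
  ∃ G : SimpleGraph (Fin n), ∃ _ : DecidableRel G.Adj, ∀ i, G.degree i = s i

/-- A sequence `s` is connected and graphic if it is the degree sequence of a
connected finite simple graph on `n` vertices. -/
def ConnectedGraphic (n : ℕ) (s : Fin n → ℕ) : Prop :=
  ∃ G : SimpleGraph (Fin n), ∃ _ : DecidableRel G.Adj,
    G.Connected ∧ ∀ i, G.degree i = s i

theorem graphic_sum_eq_realisable_by_tree (n : ℕ) (hn : 1 ≤ n) (s : Fin n → ℕ)
    (hpos : ∀ i, 0 < s i) (hgraphic : Graphic n s)
    (hsum : ∑ i, s i = 2 * (n - 1)) :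
    ConnectedGraphic n s ∧
      ∃ G : SimpleGraph (Fin n), ∃ _ : DecidableRel G.Adj,
        G.Connected ∧ G.edgeFinset.card = n - 1 ∧ ∀ i, G.degree i = s i := by
  obtain ⟨m, rfl⟩ : ∃ m, n = m + 1 := ⟨n - 1, by omega⟩
  have hsum' : ∑ i, s i = 2 * m := by simpa using hsum
  obtain ⟨G, inst, hconn, hdeg⟩ := key_lemma m s hpos hsum'
  letI := inst
  refine ⟨⟨G, inst, hconn, hdeg⟩, G, inst, hconn, ?_, hdeg⟩
  have h2 := G.sum_degrees_eq_twice_card_edges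
  rw [Finset.sum_congr rfl (fun i _ => hdeg i), hsum'] at h2
  omega
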